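/- Let $Q > 0$, $M < 0$, and $\beta > \beta_c := -\frac{3M}{Q^{3/2}(1 + \log 4)}$, and define on $\Omega > \sqrt{Q}/\beta$ the function $\tilde{f}(\Omega) = -\frac{2M}{\Omega} - \frac{2 \beta^2 Q}{3} - \frac{4 \beta Q^{3/2}}{3 \Omega} \cdot \frac{1}{2} \log\frac{\Omega\beta/\sqrt{Q} + 1}{\Omega\beta/\sqrt{Q} - 1} - \frac{2 \beta^4 \Omega^2}{3} \log\left(1 - \frac{Q}{\beta^2 \Omega^2}\right)$. Then there exists $r_0 > \sqrt{Q}/\beta$ with $\tilde{f}(r_0) = 0$. -/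

import Mathlib

open Filter Topology

set_option maxHeartbeats 2000000

/-- For `M < 0` and `β` above the critical value
`β_c = -3M/(Q^{3/2}(1 + log 4))`, the Frolov--Hayward Bonnor--Melvin metric
function vanishes at some `r₀ > √Q/β` (existence of the axis of symmetry). -/
theorem frolovHayward_melvin_axis_exists
    (β Q M : ℝ) (hQ : 0 < Q) (hM : M < 0)
    (hβ : β > -3 * M / ((Q * Real.sqrt Q) * (1 + Real.log 4))) (F : ℝ → ℝ)
    (hF : F = fun Ω => -2 * M / Ω - 2 * β ^ 2 * Q / 3
      - 4 * β * (Q * Real.sqrt Q) / (3 * Ω)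
        * ((1 / 2) * Real.log ((Ω * β / Real.sqrt Q + 1) / (Ω * β / Real.sqrt Q - 1)))
      - 2 * β ^ 4 * Ω ^ 2 / 3 * Real.log (1 - Q / (β ^ 2 * Ω ^ 2))) :
    ∃ r0 : ℝ, Real.sqrt Q / β < r0 ∧ F r0 = 0 := by
  set s := Real.sqrt Q with hsdef
  have hs : 0 < s := Real.sqrt_pos.2 hQ
  have hs2 : s ^ 2 = Q := Real.sq_sqrt hQ.le
  have hlog4 : (0:ℝ) < Real.log 4 := Real.log_pos (by norm_num)
  have hM3 : (0:ℝ) < -3 * M := by linarith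
  have hden : 0 < (Q * s) * (1 + Real.log 4) := by positivity
  have hβ0 : 0 < β := lt_trans (div_pos hM3 hden) hβ
  set Ωs := s / β with hΩsdef
  have hΩs0 : 0 < Ωs := div_pos hs hβ0
  have hFx : ∀ x : ℝ, F x = -2 * M / x - 2 * β ^ 2 * Q / 3
      - 4 * β * (Q * s) / (3 * x)
        * ((1 / 2) * Real.log ((x * β / s + 1) / (x * β / s - 1)))
      - 2 * β ^ 4 * x ^ 2 / 3 * Real.log (1 - Q / (β ^ 2 * x ^ 2)) := by
    intro x; rw [hF]
  -- basic positivity facts on the domain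
  have key : ∀ x : ℝ, Ωs < x →
      0 < x ∧ 0 < x * β / s - 1 ∧ 0 < 1 - Q / (β ^ 2 * x ^ 2) := by
    intro x hx
    have hx0 : 0 < x := lt_trans hΩs0 hx
    have h1 : s < x * β := by
      have := (div_lt_iff₀ hβ0).mp hx
      linarith
    have h2 : 0 < x * β / s - 1 := by
      rw [sub_pos, lt_div_iff₀ hs]; linarith
    have h3 : 0 < 1 - Q / (β ^ 2 * x ^ 2) := by
      rw [sub_pos, div_lt_one (by positivity)]
      nlinarith [mul_pos (sub_pos.2 h1) (by positivity : (0:ℝ) < x * β + s)]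
    exact ⟨hx0, h2, h3⟩
  -- continuity on (Ωs, ∞)
  have hcont : ContinuousOn F (Set.Ioi Ωs) := by
    rw [hF]
    have hne : ∀ x ∈ Set.Ioi Ωs, x ≠ 0 := fun x hx => (key x hx).1.ne'
    apply ContinuousOn.sub
    apply ContinuousOn.sub
    apply ContinuousOn.sub
    · exact continuousOn_const.div continuousOn_id hne
    · exact continuousOn_const
    · apply ContinuousOn.mul
      · exact continuousOn_const.div (by fun_prop)
          (fun x hx => by have := (key x hx).1; positivity)
      · apply ContinuousOn.mul continuousOn_const
        apply ContinuousOn.log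
        · exact ContinuousOn.div (by fun_prop) (by fun_prop)
            (fun x hx => (key x hx).2.1.ne')
        · intro x hx
          have h2 := (key x hx).2.1
          exact ne_of_gt (div_pos (by linarith) h2)
    · apply ContinuousOn.mul (by fun_prop)
      apply ContinuousOn.log
      · exact continuousOn_const.sub (continuousOn_const.div (by fun_prop)
          (fun x hx => by have := (key x hx).1; positivity))
      · exact fun x hx => (key x hx).2.2.ne'
  -- the limit value at Ωs
  set L := -2 * M * β / s - 2 * β ^ 2 * Q / 3 * (1 + Real.log 4) with hLdef
  have hβ' : -3 * M < β * ((Q * s) * (1 + Real.log 4)) := (div_lt_iff₀ hden).mp hβ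
  have hL0 : L < 0 := by
    have h1 : -2 * M * β / s < 2 * β ^ 2 * Q / 3 * (1 + Real.log 4) := by
      rw [div_lt_iff₀ hs]
      nlinarith [mul_lt_mul_of_pos_left hβ' (by positivity : (0:ℝ) < 2 * β / 3)]
    rw [hLdef]; linarith
  have hu1 : Ωs * β / s = 1 := by
    rw [hΩsdef]; field_simp
  -- auxiliary functions for the limit computation
  set Afun : ℝ → ℝ := fun x => -2 * M / x - 2 * β ^ 2 * Q / 3
      - 2 * β * (Q * s) / (3 * x) * Real.log (x * β / s + 1)
      - 2 * β ^ 4 * x ^ 2 / 3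
          * (Real.log (x * β / s + 1) - Real.log ((x * β / s) * (x * β / s)))
    with hAdef
  set Dfun : ℝ → ℝ := fun x => -(2 * β ^ 4 / (3 * x)) * (x ^ 2 + x * Ωs + Ωs ^ 2)
    with hDdef
  -- F agrees with the rearranged expression on (Ωs, ∞)
  have hFG : ∀ x ∈ Set.Ioi Ωs, F x = Afun x
      + Dfun x * (Real.log (x - Ωs) * (x - Ωs))
      + Dfun x * ((x - Ωs) * Real.log (β / s)) := by
    intro x hx
    obtain ⟨hx0, hu, hw⟩ := key x hx
    have hu0 : (0:ℝ) < x * β / s := by positivity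
    have hu1' : (0:ℝ) < x * β / s + 1 := by linarith
    have hxΩ : (0:ℝ) < x - Ωs := sub_pos.2 hx
    have hlog1 : Real.log ((x * β / s + 1) / (x * β / s - 1))
        = Real.log (x * β / s + 1) - Real.log (x * β / s - 1) :=
      Real.log_div hu1'.ne' hu.ne'
    have hwarg : 1 - Q / (β ^ 2 * x ^ 2)
        = ((x * β / s - 1) * (x * β / s + 1)) / ((x * β / s) * (x * β / s)) := by
      rw [← hs2]; field_simp; ring
    have hlog2 : Real.log (1 - Q / (β ^ 2 * x ^ 2))
        = Real.log (x * β / s - 1) + Real.log (x * β / s + 1)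
          - Real.log ((x * β / s) * (x * β / s)) := by
      rw [hwarg, Real.log_div (by positivity) (by positivity),
        Real.log_mul hu.ne' hu1'.ne']
    have hsplit : x * β / s - 1 = (x - Ωs) * (β / s) := by
      rw [hΩsdef]; field_simp
    have hlog3 : Real.log (x * β / s - 1) = Real.log (x - Ωs) + Real.log (β / s) := by
      rw [hsplit, Real.log_mul hxΩ.ne' (by positivity)]
    have hDC : Dfun x * (x - Ωs) = 2 * β * (Q * s) / (3 * x) - 2 * β ^ 4 * x ^ 2 / 3 := by
      rw [hDdef, hΩsdef, ← hs2]; field_simp; ring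
    rw [hFx, hlog1, hlog2, hAdef]
    have expand : Dfun x * (Real.log (x - Ωs) * (x - Ωs))
        + Dfun x * ((x - Ωs) * Real.log (β / s))
        = (Dfun x * (x - Ωs)) * Real.log (x * β / s - 1) := by
      rw [hlog3]; ring
    linear_combination (-1 : ℝ) * expand - Real.log (x * β / s - 1) * hDC
  -- tendsto of the regular part
  have hAcont : ContinuousAt Afun Ωs := by
    rw [hAdef]
    have h1 : ContinuousAt (fun x : ℝ => Real.log (x * β / s + 1)) Ωs := by
      apply ContinuousAt.log (by fun_prop)
      rw [hu1]; norm_num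
    have h2 : ContinuousAt (fun x : ℝ => Real.log ((x * β / s) * (x * β / s))) Ωs := by
      apply ContinuousAt.log (by fun_prop)
      rw [hu1]; norm_num
    have h3 : ContinuousAt (fun x : ℝ => -2 * M / x) Ωs :=
      ContinuousAt.div continuousAt_const continuousAt_id hΩs0.ne'
    have h4 : ContinuousAt (fun x : ℝ => 2 * β * (Q * s) / (3 * x)) Ωs :=
      ContinuousAt.div continuousAt_const (by fun_prop) (by positivity)
    exact ((h3.sub continuousAt_const).sub (h4.mul h1)).sub
      ((by fun_prop : ContinuousAt (fun x : ℝ => 2 * β ^ 4 * x ^ 2 / 3) Ωs).mul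
        (h1.sub h2))
  have hAval : Afun Ωs = L := by
    simp only [hAdef]
    rw [hu1, hLdef]
    rw [show ((1:ℝ) * 1) = 1 by norm_num, Real.log_one,
      show ((1:ℝ) + 1) = 2 by norm_num,
      show (4:ℝ) = 2 ^ 2 by norm_num, Real.log_pow]
    rw [hΩsdef, ← hs2]
    push_cast
    field_simp
    ring
  have hDcont : ContinuousAt Dfun Ωs := by
    rw [hDdef]
    exact ContinuousAt.mul
      (ContinuousAt.neg (ContinuousAt.div continuousAt_const (by fun_prop) (by positivity)))
      (by fun_prop)
  -- the singular part tends to 0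
  have hsub : Tendsto (fun x : ℝ => x - Ωs) (𝓝[>] Ωs) (𝓝[>] (0:ℝ)) := by
    apply tendsto_nhdsWithin_of_tendsto_nhds_of_eventually_within
    · have : Tendsto (fun x : ℝ => x - Ωs) (𝓝 Ωs) (𝓝 (Ωs - Ωs)) :=
        (continuous_id.sub continuous_const).tendsto Ωs
      simpa using this.mono_left nhdsWithin_le_nhds
    · filter_upwards [self_mem_nhdsWithin] with x hx
      exact sub_pos.2 (Set.mem_Ioi.mp hx)
  have hxlogx : Tendsto (fun x : ℝ => Real.log (x - Ωs) * (x - Ωs)) (𝓝[>] Ωs) (𝓝 0) := by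
    have h := tendsto_log_mul_rpow_nhdsGT_zero (r := 1) one_pos
    simp_rw [Real.rpow_one] at h
    exact h.comp hsub
  have hsub0 : Tendsto (fun x : ℝ => x - Ωs) (𝓝[>] Ωs) (𝓝 0) :=
    hsub.mono_right nhdsWithin_le_nhds
  -- F tends to L from the right at Ωs
  have hFtendsto : Tendsto F (𝓝[>] Ωs) (𝓝 L) := by
    have hG : Tendsto (fun x => Afun x
        + Dfun x * (Real.log (x - Ωs) * (x - Ωs))
        + Dfun x * ((x - Ωs) * Real.log (β / s))) (𝓝[>] Ωs)
        (𝓝 (Afun Ωs + Dfun Ωs * 0 + Dfun Ωs * (0 * Real.log (β / s)))) := by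
      apply Tendsto.add
      apply Tendsto.add
      · exact hAcont.tendsto.mono_left nhdsWithin_le_nhds
      · exact (hDcont.tendsto.mono_left nhdsWithin_le_nhds).mul hxlogx
      · exact (hDcont.tendsto.mono_left nhdsWithin_le_nhds).mul
          (hsub0.mul tendsto_const_nhds)
    have hG' : Tendsto (fun x => Afun x
        + Dfun x * (Real.log (x - Ωs) * (x - Ωs))
        + Dfun x * ((x - Ωs) * Real.log (β / s))) (𝓝[>] Ωs) (𝓝 L) := by
      convert hG using 2
      rw [hAval]; ring
    apply hG'.congr'
    filter_upwards [self_mem_nhdsWithin] with x hx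
    exact (hFG x hx).symm
  -- an explicit point where F is positive
  obtain ⟨P, hPdef⟩ : ∃ P : ℝ, P = 2 * β * (Q * s) / (3 * (-M)) := ⟨_, rfl⟩
  have hP0 : 0 < P := by
    rw [hPdef]
    exact div_pos (by positivity) (by linarith)
  obtain ⟨b, hbdef⟩ : ∃ b : ℝ, b = Ωs * (2 + P) := ⟨_, rfl⟩
  have hb0 : 0 < b := by rw [hbdef]; positivity
  have hΩsb : Ωs < b := by
    rw [hbdef]
    nlinarith [mul_pos hΩs0 hP0]
  have hub : b * β / s = 2 + P := by
    rw [hbdef, hΩsdef]; field_simp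
  have hFb : 0 < F b := by
    obtain ⟨hb0', hub0, hwb0⟩ := key b hΩsb
    have hval : 1 - Q / (β ^ 2 * b ^ 2) - 1 = -(Q / (β ^ 2 * b ^ 2)) := by ring
    -- bound the Hayward log term
    have hBlog : Real.log (1 - Q / (β ^ 2 * b ^ 2)) ≤ -(Q / (β ^ 2 * b ^ 2)) := by
      have := Real.log_le_sub_one_of_pos hwb0
      linarith
    have hB : 2 * β ^ 4 * b ^ 2 / 3 * Real.log (1 - Q / (β ^ 2 * b ^ 2))
        ≤ -(2 * β ^ 2 * Q / 3) := by
      have h := mul_le_mul_of_nonneg_left hBlog (by positivity : (0:ℝ) ≤ 2 * β ^ 4 * b ^ 2 / 3)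
      have heq : 2 * β ^ 4 * b ^ 2 / 3 * (-(Q / (β ^ 2 * b ^ 2))) = -(2 * β ^ 2 * Q / 3) := by
        field_simp
      linarith
    -- bound the arcoth term
    have hv0 : (0:ℝ) < (b * β / s + 1) / (b * β / s - 1) := by
      apply div_pos (by linarith) hub0
    have hAlog : Real.log ((b * β / s + 1) / (b * β / s - 1)) ≤ 2 / (1 + P) := by
      have h := Real.log_le_sub_one_of_pos hv0
      have heq : (b * β / s + 1) / (b * β / s - 1) - 1 = 2 / (1 + P) := by
        have h1P : (0:ℝ) < 1 + P := by linarith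
        rw [hub, show (2:ℝ) + P - 1 = 1 + P by ring, div_sub_one h1P.ne']
        congr 1
        ring
      linarith
    have hA : 4 * β * (Q * s) / (3 * b) * ((1 / 2)
        * Real.log ((b * β / s + 1) / (b * β / s - 1)))
        ≤ 4 * β * (Q * s) / (3 * b) * ((1 / 2) * (2 / (1 + P))) := by
      apply mul_le_mul_of_nonneg_left _ (by positivity)
      apply mul_le_mul_of_nonneg_left hAlog (by norm_num)
    -- the dominant positive term wins
    have hmain : 4 * β * (Q * s) / (3 * b) * ((1 / 2) * (2 / (1 + P))) < -2 * M / b := by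
      have h1P : (0:ℝ) < 1 + P := by linarith
      have heq : 4 * β * (Q * s) / (3 * b) * ((1 / 2) * (2 / (1 + P)))
          = (4 * β * (Q * s) / (3 * (1 + P))) / b := by
        field_simp
      rw [heq, div_lt_div_iff_of_pos_right hb0, div_lt_iff₀ (by positivity : (0:ℝ) < 3 * (1 + P))]
      have hMP : -6 * M * P = 4 * β * (Q * s) := by
        rw [hPdef]; field_simp [hM.ne]; ring
      nlinarith
    rw [hFx b]
    linarith
  -- extract a point where F is negative
  have hmem : {x | F x < 0} ∩ Set.Ioo Ωs b ∈ 𝓝[>] Ωs :=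
    Filter.inter_mem (hFtendsto (Iio_mem_nhds hL0)) (Ioo_mem_nhdsGT hΩsb)
  obtain ⟨a, haF, haI⟩ := Filter.nonempty_of_mem hmem
  have hab : a ≤ b := haI.2.le
  have hsubset : Set.Icc a b ⊆ Set.Ioi Ωs := fun x hx => lt_of_lt_of_le haI.1 hx.1
  have hivt := intermediate_value_Icc hab (hcont.mono hsubset)
  have h0mem : (0:ℝ) ∈ Set.Icc (F a) (F b) := ⟨le_of_lt haF, hFb.le⟩
  obtain ⟨r0, hr0, hFr0⟩ := hivt h0mem
  exact ⟨r0, lt_of_lt_of_le haI.1 hr0.1, hFr0⟩
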